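/- The sum of the angles of any spherical triangle on the unit sphere is strictly greater than π. -/

import Mathlib

open scoped RealInnerProductSpace

/-- The angle of the spherical triangle `ABC` at the vertex `A`: the angle between
the projections of `B` and `C` to the tangent plane of the sphere at `A`
(equivalently, the angle between the tangent vectors at `A` of the minimizing
great-circle arcs from `A` to `B` and from `A` to `C`). -/
noncomputable def sphericalAngle (A B C : EuclideanSpace ℝ (Fin 3)) : ℝ :=
  InnerProductGeometry.angle (B - ⟪A, B⟫ • A) (C - ⟪A, C⟫ • A)

section Helpers

open InnerProductGeometry Real

variable {V : Type*} [NormedAddCommGroup V] [InnerProductSpace ℝ V]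

lemma angle_congr' {x y x' y' : V} (h : ⟪x, y⟫ = ⟪x', y'⟫) (hx : ‖x‖ = ‖x'‖) (hy : ‖y‖ = ‖y'‖) :
    angle x y = angle x' y' := by
  unfold angle; rw [h, hx, hy]

/-- Strict spherical triangle inequality for unit vectors satisfying an
independence condition. -/
lemma angle_triangle_strict {x y z : V} (hx : ‖x‖ = 1) (hy : ‖y‖ = 1) (hz : ‖z‖ = 1)
    (key : ∀ a b c : ℝ, a • x + b • y + c • z = 0 → a = 0 ∧ b = 0 ∧ c = 0) :
    angle x z < angle x y + angle y z := by
  have hyy : ⟪y, y⟫ = (1 : ℝ) := by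
    rw [real_inner_self_eq_norm_sq, hy]; norm_num
  have hxx : ⟪x, x⟫ = (1 : ℝ) := by
    rw [real_inner_self_eq_norm_sq, hx]; norm_num
  have hzz : ⟪z, z⟫ = (1 : ℝ) := by
    rw [real_inner_self_eq_norm_sq, hz]; norm_num
  have hczpi : angle x z ≠ π := by
    intro hpi
    rcases (angle_eq_pi_iff.mp hpi) with ⟨hx0, r, hr, hzr⟩
    have hc : r • x + (0:ℝ) • y + (-1 : ℝ) • z = 0 := by rw [hzr]; module
    have := (key _ _ _ hc).2.2
    norm_num at this
  rcases le_or_gt π (angle x y + angle y z) with hle | hlt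
  · exact lt_of_lt_of_le (lt_of_le_of_ne (angle_le_pi x z) hczpi) hle
  · set p := x - ⟪x, y⟫ • y with hp
    set q := z - ⟪y, z⟫ • y with hq
    have hcosa : Real.cos (angle x y) = ⟪x, y⟫ := by rw [cos_angle, hx, hy]; simp
    have hcosb : Real.cos (angle y z) = ⟪y, z⟫ := by rw [cos_angle, hy, hz]; simp
    have hpq : ⟪p, q⟫ = ⟪x, z⟫ - ⟪x, y⟫ * ⟪y, z⟫ := by
      rw [hp, hq]
      simp only [inner_sub_left, inner_sub_right, real_inner_smul_left, real_inner_smul_right, hyy]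
      rw [real_inner_comm y x, real_inner_comm z y]
      ring
    have hpp : ⟪p, p⟫ = 1 - ⟪x, y⟫ ^ 2 := by
      rw [hp]
      simp only [inner_sub_left, inner_sub_right, real_inner_smul_left, real_inner_smul_right,
        hyy, hxx]
      rw [real_inner_comm y x]
      ring
    have hqq : ⟪q, q⟫ = 1 - ⟪y, z⟫ ^ 2 := by
      rw [hq]
      simp only [inner_sub_left, inner_sub_right, real_inner_smul_left, real_inner_smul_right,
        hyy, hzz]
      rw [real_inner_comm z y]
      ring
    have hnp : ‖p‖ = Real.sin (angle x y) := by
      rw [norm_eq_sqrt_real_inner, hpp,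
        Real.sin_eq_sqrt_one_sub_cos_sq (angle_nonneg x y) (angle_le_pi x y), hcosa]
    have hnq : ‖q‖ = Real.sin (angle y z) := by
      rw [norm_eq_sqrt_real_inner, hqq,
        Real.sin_eq_sqrt_one_sub_cos_sq (angle_nonneg y z) (angle_le_pi y z), hcosb]
    have hq0 : q ≠ 0 := by
      intro h0
      have hc : (0:ℝ) • x + (-⟪y, z⟫) • y + (1:ℝ) • z = 0 := by
        have e : (0:ℝ) • x + (-⟪y, z⟫) • y + (1:ℝ) • z = q := by rw [hq]; module
        rw [e, h0]
      have := (key _ _ _ hc).2.2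
      norm_num at this
    have hCS : -(‖p‖ * ‖q‖) < ⟪p, q⟫ := by
      have h1 : ⟪-p, q⟫ < ‖-p‖ * ‖q‖ := by
        rw [inner_lt_norm_mul_iff_real]
        intro hcontra
        rw [norm_neg] at hcontra
        have hcomb : (-(‖q‖)) • x + (‖q‖ * ⟪x, y⟫ + ‖p‖ * ⟪y, z⟫) • y + (-(‖p‖)) • z = 0 := by
          have e : (-(‖q‖)) • x + (‖q‖ * ⟪x, y⟫ + ‖p‖ * ⟪y, z⟫) • y + (-(‖p‖)) • z
              = ‖q‖ • -p - ‖p‖ • q := by rw [hp, hq]; module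
          rw [e, hcontra, sub_self]
        have h2 := (key _ _ _ hcomb).1
        have : ‖q‖ = 0 := by linarith [neg_eq_zero.mp h2]
        exact hq0 (norm_eq_zero.mp this)
      rw [inner_neg_left, norm_neg] at h1
      linarith
    have hcoslt : Real.cos (angle x y + angle y z) < Real.cos (angle x z) := by
      have hcxz : Real.cos (angle x z) = ⟪x, z⟫ := by rw [cos_angle, hx, hz]; simp
      rw [Real.cos_add, hcosa, hcosb, hcxz]
      have e : ⟪x, z⟫ = ⟪p, q⟫ + ⟪x, y⟫ * ⟪y, z⟫ := by rw [hpq]; ring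
      rw [e, ← hnp, ← hnq]
      linarith
    by_contra hcon
    push_neg at hcon
    rcases eq_or_lt_of_le hcon with heq | hlt2
    · rw [heq] at hcoslt; exact lt_irrefl _ hcoslt
    · have := Real.strictAntiOn_cos
        ⟨add_nonneg (angle_nonneg x y) (angle_nonneg y z), le_of_lt hlt⟩
        ⟨angle_nonneg x z, angle_le_pi x z⟩ hlt2
      exact absurd hcoslt (not_lt.mpr (le_of_lt this))

/-- Strict spherical triangle inequality for arbitrary vectors satisfying an
independence condition. -/
lemma angle_triangle_strict' {x y z : V}
    (key : ∀ a b c : ℝ, a • x + b • y + c • z = 0 → a = 0 ∧ b = 0 ∧ c = 0) :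
    angle x z < angle x y + angle y z := by
  have hx0 : x ≠ 0 := by
    intro h
    have := (key 1 0 0 (by rw [h]; module)).1
    norm_num at this
  have hy0 : y ≠ 0 := by
    intro h
    have := (key 0 1 0 (by rw [h]; module)).2.1
    norm_num at this
  have hz0 : z ≠ 0 := by
    intro h
    have := (key 0 0 1 (by rw [h]; module)).2.2
    norm_num at this
  have hxn : (0:ℝ) < ‖x‖ := norm_pos_iff.mpr hx0
  have hyn : (0:ℝ) < ‖y‖ := norm_pos_iff.mpr hy0
  have hzn : (0:ℝ) < ‖z‖ := norm_pos_iff.mpr hz0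
  have e1 : angle x z = angle (‖x‖⁻¹ • x) (‖z‖⁻¹ • z) := by
    rw [angle_smul_left_of_pos _ _ (inv_pos.mpr hxn), angle_smul_right_of_pos _ _ (inv_pos.mpr hzn)]
  have e2 : angle x y = angle (‖x‖⁻¹ • x) (‖y‖⁻¹ • y) := by
    rw [angle_smul_left_of_pos _ _ (inv_pos.mpr hxn), angle_smul_right_of_pos _ _ (inv_pos.mpr hyn)]
  have e3 : angle y z = angle (‖y‖⁻¹ • y) (‖z‖⁻¹ • z) := by
    rw [angle_smul_left_of_pos _ _ (inv_pos.mpr hyn), angle_smul_right_of_pos _ _ (inv_pos.mpr hzn)]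
  rw [e1, e2, e3]
  apply angle_triangle_strict (norm_smul_inv_norm hx0) (norm_smul_inv_norm hy0)
    (norm_smul_inv_norm hz0)
  intro a b c h
  have h' : (a * ‖x‖⁻¹) • x + (b * ‖y‖⁻¹) • y + (c * ‖z‖⁻¹) • z = 0 := by
    simpa only [smul_smul, RCLike.ofReal_real_eq_id, id_eq] using h
  obtain ⟨ha, hb, hc⟩ := key _ _ _ h'
  refine ⟨?_, ?_, ?_⟩
  · rcases mul_eq_zero.mp ha with h | h
    · exact h
    · exact absurd h (by positivity)
  · rcases mul_eq_zero.mp hb with h | h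
    · exact h
    · exact absurd h (by positivity)
  · rcases mul_eq_zero.mp hc with h | h
    · exact h
    · exact absurd h (by positivity)

end Helpers

/-- The cross product on `EuclideanSpace ℝ (Fin 3)`. -/
noncomputable def cr (x y : EuclideanSpace ℝ (Fin 3)) : EuclideanSpace ℝ (Fin 3) :=
  (WithLp.equiv 2 (Fin 3 → ℝ)).symm
    ![x 1 * y 2 - x 2 * y 1, x 2 * y 0 - x 0 * y 2, x 0 * y 1 - x 1 * y 0]

lemma inner3 (x y : EuclideanSpace ℝ (Fin 3)) : ⟪x, y⟫ = x 0 * y 0 + x 1 * y 1 + x 2 * y 2 := by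
  simp [PiLp.inner_apply, Fin.sum_univ_three, RCLike.inner_apply, mul_comm]

lemma cr_apply (x y : EuclideanSpace ℝ (Fin 3)) (i : Fin 3) :
    cr x y i = ![x 1 * y 2 - x 2 * y 1, x 2 * y 0 - x 0 * y 2, x 0 * y 1 - x 1 * y 0] i := rfl

lemma inner_cr_cr (x y z w : EuclideanSpace ℝ (Fin 3)) :
    ⟪cr x y, cr z w⟫ = ⟪x, z⟫ * ⟪y, w⟫ - ⟪x, w⟫ * ⟪y, z⟫ := by
  simp only [inner3, cr_apply]
  simp
  ring

lemma cr_inner_left (x y : EuclideanSpace ℝ (Fin 3)) : ⟪cr x y, x⟫ = 0 := by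
  simp only [inner3, cr_apply]; simp; ring

lemma cr_inner_right (x y : EuclideanSpace ℝ (Fin 3)) : ⟪cr x y, y⟫ = 0 := by
  simp only [inner3, cr_apply]; simp; ring

lemma cr_cyclic (x y z : EuclideanSpace ℝ (Fin 3)) : ⟪cr x y, z⟫ = ⟪cr y z, x⟫ := by
  simp only [inner3, cr_apply]; simp; ring

lemma cr_anti (x y : EuclideanSpace ℝ (Fin 3)) : cr x y = - cr y x := by
  apply (WithLp.equiv 2 (Fin 3 → ℝ)).injective
  funext i
  fin_cases i <;> simp [cr_apply] <;> ring

/-- The spherical angle at a vertex on the unit sphere equals the angle between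
the corresponding cross products. -/
lemma sphericalAngle_eq_angle_cr (X Y Z : EuclideanSpace ℝ (Fin 3)) (hX : ‖X‖ = 1) :
    InnerProductGeometry.angle (Y - ⟪X, Y⟫ • X) (Z - ⟪X, Z⟫ • X)
      = InnerProductGeometry.angle (cr X Y) (cr X Z) := by
  have hXX : ⟪X, X⟫ = (1:ℝ) := by rw [real_inner_self_eq_norm_sq, hX]; norm_num
  have hinner : ⟪Y - ⟪X, Y⟫ • X, Z - ⟪X, Z⟫ • X⟫ = ⟪cr X Y, cr X Z⟫ := by
    rw [inner_cr_cr, hXX]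
    simp only [inner_sub_left, inner_sub_right, real_inner_smul_left, real_inner_smul_right, hXX]
    rw [real_inner_comm X Y, real_inner_comm Z X, real_inner_comm Y X]
    ring
  have hY : ‖Y - ⟪X, Y⟫ • X‖ = ‖cr X Y‖ := by
    rw [norm_eq_sqrt_real_inner, norm_eq_sqrt_real_inner]
    congr 1
    rw [inner_cr_cr, hXX]
    simp only [inner_sub_left, inner_sub_right, real_inner_smul_left, real_inner_smul_right, hXX]
    rw [real_inner_comm X Y, real_inner_comm Y X]
    ring
  have hZ : ‖Z - ⟪X, Z⟫ • X‖ = ‖cr X Z‖ := by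
    rw [norm_eq_sqrt_real_inner, norm_eq_sqrt_real_inner]
    congr 1
    rw [inner_cr_cr, hXX]
    simp only [inner_sub_left, inner_sub_right, real_inner_smul_left, real_inner_smul_right, hXX]
    rw [real_inner_comm X Z, real_inner_comm Z X]
    ring
  exact angle_congr' hinner hY hZ

/-- The sum of the angles of any spherical triangle on the unit sphere (vertices
linearly independent, so no two are antipodal and they do not lie on a common
great circle) is strictly greater than `π`. -/
theorem spherical_triangle_angle_sum_gt_pi
    (A B C : EuclideanSpace ℝ (Fin 3))
    (hA : ‖A‖ = 1) (hB : ‖B‖ = 1) (hC : ‖C‖ = 1)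
    (hindep : LinearIndependent ℝ ![A, B, C]) :
    Real.pi < sphericalAngle A B C + sphericalAngle B C A + sphericalAngle C A B := by
  classical
  open InnerProductGeometry in
  have hBB : ⟪B, B⟫ = (1:ℝ) := by rw [real_inner_self_eq_norm_sq, hB]; norm_num
  have hCC : ⟪C, C⟫ = (1:ℝ) := by rw [real_inner_self_eq_norm_sq, hC]; norm_num
  have key3 : ∀ a b c : ℝ, a • A + b • B + c • C = 0 → a = 0 ∧ b = 0 ∧ c = 0 := by
    intro a b c h
    have h2 := Fintype.linearIndependent_iff.mp hindep ![a, b, c] ?_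
    · exact ⟨h2 0, h2 1, h2 2⟩
    · simpa [Fin.sum_univ_three] using h
  set u := cr B C with hu
  set v := cr C A with hv
  set w := cr A B with hw
  -- u ≠ 0
  have hu0 : u ≠ 0 := by
    intro h0
    have huu : ⟪u, u⟫ = 1 - ⟪B, C⟫ * ⟪B, C⟫ := by
      rw [hu, inner_cr_cr, hBB, hCC, real_inner_comm C B]; ring
    rw [h0, inner_zero_left] at huu
    have hfac : (⟪B, C⟫ - 1) * (⟪B, C⟫ + 1) = 0 := by nlinarith
    rcases mul_eq_zero.mp hfac with h1 | h1
    · have : ⟪B, C⟫ = 1 := by linarith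
      have hBC : B = C := (inner_eq_one_iff_of_norm_eq_one hB hC).mp this
      have := (key3 0 1 (-1) (by rw [hBC]; module)).2.1
      norm_num at this
    · have : ⟪B, (-C : EuclideanSpace ℝ (Fin 3))⟫ = 1 := by
        rw [inner_neg_right]; linarith
      have hBC : B = -C := (inner_eq_one_iff_of_norm_eq_one hB (by rw [norm_neg, hC])).mp this
      have := (key3 0 1 1 (by rw [hBC]; module)).2.1
      norm_num at this
  -- the triple product is nonzero
  have hD : ⟪u, A⟫ ≠ 0 := by
    intro hD0
    have hmem : ∀ i : Fin 3, (![A, B, C] : Fin 3 → EuclideanSpace ℝ (Fin 3)) i ∈ (ℝ ∙ u)ᗮ := by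
      intro i
      rw [Submodule.mem_orthogonal_singleton_iff_inner_right]
      fin_cases i
      · exact hD0
      · exact cr_inner_left B C
      · exact cr_inner_right B C
    haveI : Fact (Module.finrank ℝ (EuclideanSpace ℝ (Fin 3)) = 2 + 1) :=
      ⟨by simp [finrank_euclideanSpace_fin]⟩
    have hdim : Module.finrank ℝ ((ℝ ∙ u)ᗮ : Submodule ℝ (EuclideanSpace ℝ (Fin 3))) = 2 :=
      Submodule.finrank_orthogonal_span_singleton hu0
    set f : Fin 3 → ((ℝ ∙ u)ᗮ : Submodule ℝ (EuclideanSpace ℝ (Fin 3))) :=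
      fun i => ⟨![A, B, C] i, hmem i⟩ with hf
    have hfi : LinearIndependent ℝ f := by
      apply LinearIndependent.of_comp ((ℝ ∙ u)ᗮ).subtype
      exact hindep
    have hcard := hfi.fintype_card_le_finrank
    rw [hdim] at hcard
    simp at hcard
  -- linear independence of the cross products
  have keyuvw : ∀ a b c : ℝ, a • u + b • v + c • w = 0 → a = 0 ∧ b = 0 ∧ c = 0 := by
    intro a b c h
    have hvA : ⟪v, A⟫ = 0 := cr_inner_right C A
    have hwA : ⟪w, A⟫ = 0 := cr_inner_left A B
    have huB : ⟪u, B⟫ = 0 := cr_inner_left B C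
    have huC : ⟪u, C⟫ = 0 := cr_inner_right B C
    have hvC : ⟪v, C⟫ = 0 := cr_inner_left C A
    have hwB : ⟪w, B⟫ = 0 := cr_inner_right A B
    have hvB : ⟪v, B⟫ = ⟪u, A⟫ := by rw [hv, hu, cr_cyclic C A B, cr_cyclic A B C]
    have hwC : ⟪w, C⟫ = ⟪u, A⟫ := by rw [hw, hu, cr_cyclic A B C]
    have eA : a * ⟪u, A⟫ = 0 := by
      have := congrArg (fun t : EuclideanSpace ℝ (Fin 3) => ⟪t, A⟫) h
      simpa only [inner_add_left, real_inner_smul_left, hvA, hwA, inner_zero_left, mul_zero, add_zero, zero_add] using this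
    have eB : b * ⟪u, A⟫ = 0 := by
      have := congrArg (fun t : EuclideanSpace ℝ (Fin 3) => ⟪t, B⟫) h
      simpa only [inner_add_left, real_inner_smul_left, huB, hwB, hvB, inner_zero_left, mul_zero, add_zero, zero_add] using this
    have eC : c * ⟪u, A⟫ = 0 := by
      have := congrArg (fun t : EuclideanSpace ℝ (Fin 3) => ⟪t, C⟫) h
      simpa only [inner_add_left, real_inner_smul_left, huC, hvC, hwC, inner_zero_left, mul_zero, add_zero, zero_add] using this
    exact ⟨by rcases mul_eq_zero.mp eA with h' | h'; exact h'; exact absurd h' hD,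
      by rcases mul_eq_zero.mp eB with h' | h'; exact h'; exact absurd h' hD,
      by rcases mul_eq_zero.mp eC with h' | h'; exact h'; exact absurd h' hD⟩
  -- the three spherical angles in terms of cross products
  have sA : sphericalAngle A B C = Real.pi - angle w v := by
    rw [sphericalAngle, sphericalAngle_eq_angle_cr A B C hA, ← hw]
    rw [show cr A C = -v by rw [hv, cr_anti]]
    rw [angle_neg_right]
  have sB : sphericalAngle B C A = Real.pi - angle u w := by
    rw [sphericalAngle, sphericalAngle_eq_angle_cr B C A hB, ← hu]
    rw [show cr B A = -w by rw [hw, cr_anti]]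
    rw [angle_neg_right]
  have sC : sphericalAngle C A B = Real.pi - angle v u := by
    rw [sphericalAngle, sphericalAngle_eq_angle_cr C A B hC, ← hv]
    rw [show cr C B = -u by rw [hu, cr_anti]]
    rw [angle_neg_right]
  -- the strict triangle inequality for u, -v, w
  have htri : angle u w < angle u (-v) + angle (-v) w := by
    apply angle_triangle_strict'
    intro a b c h
    have h' : a • u + (-b) • v + c • w = 0 := by
      rw [← h]; module
    obtain ⟨ha, hb, hc⟩ := keyuvw _ _ _ h'
    exact ⟨ha, by linarith [neg_eq_zero.mp hb], hc⟩
  rw [angle_neg_right, angle_neg_left] at htri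
  rw [sA, sB, sC, InnerProductGeometry.angle_comm w v, InnerProductGeometry.angle_comm v u]
  linarith
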